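/- The transformation r2 of the quantum degenerate Garnier system G(1,2,2) is a quantum canonical transformation: suppose x1 is a unit of R, and define q1 = x1^{-1}, p1 = −x1^2y1 − α2·x1 − y2 + 1, q2 = x1^{-1} + x2, p2 = y2. Then (q1, p1, q2, p2) again satisfy the canonical commutation relations: [q1,p1] = [q2,p2] = h and [q1,q2] = [p1,p2] = [q1,p2] = [q2,p1] = 0. -/
import Mathlib


/-- The transformation r2 of the quantum degenerate Garnier system G(1,2,2) is a
quantum canonical transformation. -/
theorem quantum_garnier_G122_r2_canonical
    {R : Type*} [Ring R]
    (h α2 : R)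
    (hh : ∀ r : R, h * r = r * h)
    (hA2 : ∀ r : R, α2 * r = r * α2)
    (x1 y1 x2 y2 : R)
    (hx1y1 : x1 * y1 - y1 * x1 = h)
    (hx2y2 : x2 * y2 - y2 * x2 = h)
    (hx1x2 : x1 * x2 - x2 * x1 = 0)
    (hy1y2 : y1 * y2 - y2 * y1 = 0)
    (hx1y2 : x1 * y2 - y2 * x1 = 0)
    (hx2y1 : x2 * y1 - y1 * x2 = 0)
    (x1i : R) (hx1il : x1i * x1 = 1) (hx1ir : x1 * x1i = 1)
    (q1 p1 q2 p2 : R)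
    (hq1 : q1 = x1i)
    (hp1 : p1 = -(x1^2 * y1) - α2 * x1 - y2 + 1)
    (hq2 : q2 = x1i + x2)
    (hp2 : p2 = y2) :
    q1 * p1 - p1 * q1 = h ∧ q2 * p2 - p2 * q2 = h ∧
    q1 * q2 - q2 * q1 = 0 ∧ p1 * p2 - p2 * p1 = 0 ∧
    q1 * p2 - p2 * q1 = 0 ∧ q2 * p1 - p1 * q2 = 0 := by
  subst hq1 hp1 hq2 hp2
  -- basic commutation equalities
  have e12 : x1 * x2 = x2 * x1 := sub_eq_zero.mp hx1x2
  have ey12 : y1 * p2 = p2 * y1 := sub_eq_zero.mp hy1y2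
  have e1y2 : x1 * p2 = p2 * x1 := sub_eq_zero.mp hx1y2
  have e2y1 : x2 * y1 = y1 * x2 := sub_eq_zero.mp hx2y1
  have ex1y1 : x1 * y1 = y1 * x1 + h := by rw [← hx1y1]; noncomm_ring
  have ey2x2 : p2 * x2 = x2 * p2 - h := by rw [← hx2y2]; noncomm_ring
  -- q1 commutes with p2
  have hi_y2 : q1 * p2 = p2 * q1 := by
    calc q1 * p2 = q1 * ((p2 * x1) * q1) := by rw [mul_assoc, hx1ir, mul_one]
      _ = q1 * ((x1 * p2) * q1) := by rw [← e1y2]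
      _ = (q1 * x1) * (p2 * q1) := by noncomm_ring
      _ = p2 * q1 := by rw [hx1il, one_mul]
  -- q1 commutes with x2
  have hi_x2 : q1 * x2 = x2 * q1 := by
    calc q1 * x2 = q1 * ((x2 * x1) * q1) := by rw [mul_assoc, hx1ir, mul_one]
      _ = q1 * ((x1 * x2) * q1) := by rw [← e12]
      _ = (q1 * x1) * (x2 * q1) := by noncomm_ring
      _ = x2 * q1 := by rw [hx1il, one_mul]
  -- y1 past q1
  have hi_y1 : y1 * q1 = q1 * y1 + h * (q1 * q1) := by
    calc y1 * q1 = (q1 * x1) * (y1 * q1) := by rw [hx1il, one_mul]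
      _ = q1 * ((x1 * y1) * q1) := by noncomm_ring
      _ = q1 * ((y1 * x1 + h) * q1) := by rw [ex1y1]
      _ = (q1 * y1) * (x1 * q1) + q1 * h * q1 := by noncomm_ring
      _ = q1 * y1 + (h * q1) * q1 := by rw [hx1ir, mul_one, ← hh q1]
      _ = q1 * y1 + h * (q1 * q1) := by rw [mul_assoc]
  have A : q1 * (x1 ^ 2 * y1) = x1 * y1 := by
    rw [pow_two]
    calc q1 * (x1 * x1 * y1) = (q1 * x1) * (x1 * y1) := by noncomm_ring
      _ = x1 * y1 := by rw [hx1il, one_mul]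
  have hcomm : ∀ a b : R, a * (h * b) = h * (a * b) := fun a b => by
    rw [← mul_assoc, ← hh a, mul_assoc]
  have B : (x1 ^ 2 * y1) * q1 = x1 * y1 + h := by
    rw [pow_two]
    calc (x1 * x1 * y1) * q1 = x1 * (x1 * (y1 * q1)) := by noncomm_ring
      _ = x1 * (x1 * (q1 * y1 + h * (q1 * q1))) := by rw [hi_y1]
      _ = x1 * (x1 * (q1 * y1)) + x1 * (x1 * (h * (q1 * q1))) := by noncomm_ring
      _ = x1 * (x1 * (q1 * y1)) + h * (x1 * (x1 * (q1 * q1))) := by rw [hcomm, hcomm]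
      _ = x1 * ((x1 * q1) * y1) + h * (x1 * ((x1 * q1) * q1)) := by noncomm_ring
      _ = x1 * y1 + h := by rw [hx1ir, one_mul, one_mul, hx1ir, mul_one]
  have hAi : q1 * (α2 * x1) = (α2 * x1) * q1 := by
    calc q1 * (α2 * x1) = α2 * (q1 * x1) := by rw [← mul_assoc, ← hA2 q1, mul_assoc]
      _ = α2 * (x1 * q1) := by rw [hx1il, hx1ir]
      _ = (α2 * x1) * q1 := by rw [mul_assoc]
  -- first bracket [q1,p1] = h
  have c1 : q1 * (-(x1 ^ 2 * y1) - α2 * x1 - p2 + 1) -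
      (-(x1 ^ 2 * y1) - α2 * x1 - p2 + 1) * q1 = h := by
    have expand : q1 * (-(x1 ^ 2 * y1) - α2 * x1 - p2 + 1) -
        (-(x1 ^ 2 * y1) - α2 * x1 - p2 + 1) * q1 =
        ((x1 ^ 2 * y1) * q1 - q1 * (x1 ^ 2 * y1)) +
        ((α2 * x1) * q1 - q1 * (α2 * x1)) + (p2 * q1 - q1 * p2) := by
      noncomm_ring
    rw [expand, A, B, hAi, hi_y2]
    noncomm_ring
  -- [q2,p2] = h
  have c2 : (q1 + x2) * p2 - p2 * (q1 + x2) = h := by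
    have expand : (q1 + x2) * p2 - p2 * (q1 + x2) =
        (q1 * p2 - p2 * q1) + (x2 * p2 - p2 * x2) := by noncomm_ring
    rw [expand, hi_y2, hx2y2]
    noncomm_ring
  -- [q1,q2] = 0
  have c3 : q1 * (q1 + x2) - (q1 + x2) * q1 = 0 := by
    have expand : q1 * (q1 + x2) - (q1 + x2) * q1 =
        q1 * x2 - x2 * q1 := by noncomm_ring
    rw [expand, hi_x2, sub_self]
  -- commutation of p1 pieces with p2
  have C : (x1 ^ 2 * y1) * p2 = p2 * (x1 ^ 2 * y1) := by
    rw [pow_two]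
    calc (x1 * x1 * y1) * p2 = x1 * (x1 * (y1 * p2)) := by noncomm_ring
      _ = x1 * (x1 * (p2 * y1)) := by rw [ey12]
      _ = x1 * ((x1 * p2) * y1) := by noncomm_ring
      _ = x1 * ((p2 * x1) * y1) := by rw [e1y2]
      _ = (x1 * p2) * (x1 * y1) := by noncomm_ring
      _ = (p2 * x1) * (x1 * y1) := by rw [e1y2]
      _ = p2 * (x1 * x1 * y1) := by noncomm_ring
  have D : (α2 * x1) * p2 = p2 * (α2 * x1) := by
    calc (α2 * x1) * p2 = α2 * (x1 * p2) := by rw [mul_assoc]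
      _ = α2 * (p2 * x1) := by rw [e1y2]
      _ = (α2 * p2) * x1 := by rw [mul_assoc]
      _ = (p2 * α2) * x1 := by rw [hA2 p2]
      _ = p2 * (α2 * x1) := by rw [mul_assoc]
  -- [p1,p2] = 0
  have c4 : (-(x1 ^ 2 * y1) - α2 * x1 - p2 + 1) * p2 -
      p2 * (-(x1 ^ 2 * y1) - α2 * x1 - p2 + 1) = 0 := by
    have expand : (-(x1 ^ 2 * y1) - α2 * x1 - p2 + 1) * p2 -
        p2 * (-(x1 ^ 2 * y1) - α2 * x1 - p2 + 1) =
        (p2 * (x1 ^ 2 * y1) - (x1 ^ 2 * y1) * p2) +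
        (p2 * (α2 * x1) - (α2 * x1) * p2) := by noncomm_ring
    rw [expand, C, D]
    noncomm_ring
  -- [q1,p2] = 0
  have c5 : q1 * p2 - p2 * q1 = 0 := by rw [hi_y2, sub_self]
  -- commutation of p1 pieces with x2
  have E : x2 * (x1 ^ 2 * y1) = (x1 ^ 2 * y1) * x2 := by
    rw [pow_two]
    calc x2 * (x1 * x1 * y1) = (x2 * x1) * (x1 * y1) := by noncomm_ring
      _ = (x1 * x2) * (x1 * y1) := by rw [← e12]
      _ = x1 * ((x2 * x1) * y1) := by noncomm_ring
      _ = x1 * ((x1 * x2) * y1) := by rw [← e12]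
      _ = (x1 * x1) * (x2 * y1) := by noncomm_ring
      _ = (x1 * x1) * (y1 * x2) := by rw [e2y1]
      _ = (x1 * x1 * y1) * x2 := by noncomm_ring
  have F : x2 * (α2 * x1) = (α2 * x1) * x2 := by
    calc x2 * (α2 * x1) = α2 * (x2 * x1) := by rw [← mul_assoc, ← hA2 x2, mul_assoc]
      _ = α2 * (x1 * x2) := by rw [e12]
      _ = (α2 * x1) * x2 := by rw [mul_assoc]
  -- [q2,p1] = 0
  have c6 : (q1 + x2) * (-(x1 ^ 2 * y1) - α2 * x1 - p2 + 1) -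
      (-(x1 ^ 2 * y1) - α2 * x1 - p2 + 1) * (q1 + x2) = 0 := by
    have expand : (q1 + x2) * (-(x1 ^ 2 * y1) - α2 * x1 - p2 + 1) -
        (-(x1 ^ 2 * y1) - α2 * x1 - p2 + 1) * (q1 + x2) =
        (q1 * (-(x1 ^ 2 * y1) - α2 * x1 - p2 + 1) -
          (-(x1 ^ 2 * y1) - α2 * x1 - p2 + 1) * q1) +
        (((x1 ^ 2 * y1) * x2 - x2 * (x1 ^ 2 * y1)) +
          ((α2 * x1) * x2 - x2 * (α2 * x1)) + (p2 * x2 - x2 * p2)) := by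
      noncomm_ring
    rw [expand, c1, E, F, ey2x2]
    noncomm_ring
  exact ⟨c1, c2, c3, c4, c5, c6⟩
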